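/- Let (X,d,μ) be a metric measure space, Q > 1, ε > 0, c > 0, and let g ∈ L^Q(X,μ) be nonnegative and Borel measurable. Define E = { x ∈ X : there exist arbitrarily small 0 < r < 1/5 such that ∫_{B(x,r)} g^Q dμ ≥ c (log(1/r))^{−(Q−1+ε/2)} }. Then H^{h_1}(E) < ∞, where h_1(t) = (log(1/t))^{1−Q−ε/2}, and consequently H^h(E) = 0, where h(t) = (log(1/t))^{1−Q−ε}. -/

import Mathlib

open MeasureTheory Metric Set Filter Topology ENNReal

noncomputable section

/-- Every (open) ball has positive and finite measure. -/
def BallsPosFinite {X : Type*} [MetricSpace X] [MeasurableSpace X]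
    (μ : Measure X) : Prop :=
  ∀ (x : X) (r : ℝ), 0 < r → 0 < μ (ball x r) ∧ μ (ball x r) < ⊤

/-- `μ` is doubling with constant `Cμ`. -/
def DoublingWith {X : Type*} [MetricSpace X] [MeasurableSpace X]
    (μ : Measure X) (Cμ : ℝ≥0∞) : Prop :=
  ∀ (x : X) (r : ℝ), 0 < r → μ (ball x (2 * r)) ≤ Cμ * μ (ball x r)

/-- `μ` is a doubling measure. -/
def Doubling {X : Type*} [MetricSpace X] [MeasurableSpace X]
    (μ : Measure X) : Prop :=
  ∃ Cμ : ℝ≥0∞, 1 ≤ Cμ ∧ Cμ < ⊤ ∧ DoublingWith μ Cμ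

/-- Relative lower volume decay with exponent `Q` and constant `C`:
`(s/r)^Q ≤ C · μ(B(x,s))/μ(B(a,r))` whenever `x ∈ B(a,r)` and `0 < s ≤ r`. -/
def LowerVolume {X : Type*} [MetricSpace X] [MeasurableSpace X]
    (μ : Measure X) (Q C : ℝ) : Prop :=
  ∀ (a x : X) (r s : ℝ), x ∈ ball a r → 0 < s → s ≤ r →
    ENNReal.ofReal ((s / r) ^ Q) ≤ ENNReal.ofReal C * (μ (ball x s) / μ (ball a r))

/-- `(X,d,μ)` is `Q`-doubling: `μ` is doubling and the relative lower volume
decay `(s/r)^Q ≤ C μ(B(x,s))/μ(B(a,r))` holds for some constant `C ≥ 1`. -/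
def QDoubling {X : Type*} [MetricSpace X] [MeasurableSpace X]
    (μ : Measure X) (Q : ℝ) : Prop :=
  Doubling μ ∧ ∃ C : ℝ, 1 ≤ C ∧ LowerVolume μ Q C

/-- The pair `(u,g)` satisfies the `p`-Poincaré inequality with constants `C` and `lam`:
for every ball `B`, `⨍_B |u - u_B| dμ ≤ C diam(B) (⨍_{lam B} g^p dμ)^{1/p}`. -/
def PoincarePair {X : Type*} [MetricSpace X] [MeasurableSpace X]
    (μ : Measure X) (u g : X → ℝ) (p C lam : ℝ) : Prop :=
  ∀ (x : X) (r : ℝ), 0 < r →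
    ⨍ y in ball x r, |u y - ⨍ z in ball x r, u z ∂μ| ∂μ ≤
      C * diam (ball x r) * (⨍ y in ball x (lam * r), g y ^ p ∂μ) ^ (1 / p)

/-- A chain of balls `B_i = B(c i, s i)` associated with the point `x` and
radius `r`, with parameters `lam, M, m`. -/
def IsBallChain {X : Type*} [MetricSpace X] (lam M m : ℝ) (x : X) (r : ℝ)
    (c : ℕ → X) (s : ℕ → ℝ) : Prop :=
  (∀ i, 0 < s i) ∧
  -- (1) `B_0 ⊆ X \ B(x,r)`
  ball (c 0) (s 0) ⊆ (ball x r)ᶜ ∧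
  -- (2) `M⁻¹ diam(B_i) ≤ dist(x,B_i) ≤ M diam(B_i)`
  (∀ i, M⁻¹ * diam (ball (c i) (s i)) ≤ infDist x (ball (c i) (s i)) ∧
      infDist x (ball (c i) (s i)) ≤ M * diam (ball (c i) (s i))) ∧
  -- (3) `dist(x,B_i) ≤ M r 2^{-m i}`
  (∀ i : ℕ, infDist x (ball (c i) (s i)) ≤ M * r * (2 : ℝ) ^ (-(m * i))) ∧
  -- (4) there is a ball `D_i ⊆ B_i ∩ B_{i+1}` with `B_i ∪ B_{i+1} ⊆ M D_i`
  (∀ i : ℕ, ∃ (y : X) (t : ℝ), 0 < t ∧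
      ball y t ⊆ ball (c i) (s i) ∩ ball (c (i + 1)) (s (i + 1)) ∧
      ball (c i) (s i) ∪ ball (c (i + 1)) (s (i + 1)) ⊆ ball y (M * t)) ∧
  -- (5) no point of `X` belongs to more than `M` balls `lam B_i`
  (∀ y : X, {i : ℕ | y ∈ ball (c i) (lam * s i)}.Finite ∧
      ({i : ℕ | y ∈ ball (c i) (lam * s i)}.ncard : ℝ) ≤ M)

/-- `X` satisfies the chain condition: for every `lam ≥ 1` there are constants
`M ≥ 1`, `0 < m ≤ 1` such that for each `x ∈ X` and all `0 < r < diam(X)/8`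
there is a chain of balls associated with `x, r`. -/
def ChainCondition (X : Type*) [MetricSpace X] : Prop :=
  ∀ lam : ℝ, 1 ≤ lam → ∃ M m : ℝ, 1 ≤ M ∧ 0 < m ∧ m ≤ 1 ∧
    ∀ (x : X) (r : ℝ), 0 < r →
      ENNReal.ofReal r < EMetric.diam (Set.univ : Set X) / 8 →
      ∃ (c : ℕ → X) (s : ℕ → ℝ), IsBallChain lam M m x r c s

/-- The gauge function `h(t) = (log(1/t))^p` (as a function on `ℝ≥0∞`). -/
def hGauge (p : ℝ) : ℝ≥0∞ → ℝ≥0∞ :=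
  fun t => ENNReal.ofReal (Real.log (1 / t.toReal) ^ p)

/-- The generalized Hausdorff measure with gauge function `h(t) = (log(1/t))^p`. -/
def hausdorffH {X : Type*} [MetricSpace X] [MeasurableSpace X] [BorelSpace X]
    (p : ℝ) : Measure X :=
  Measure.mkMetric (hGauge p)


/-- Auxiliary real estimate for the gauge: if `0 < s ≤ 1/100`, `0 ≤ d ≤ 10 s` and `P < 0`,
then `log(1/d)^P ≤ 2^(-P) · log(1/s)^P`. -/
private lemma gauge_real_est {P s d : ℝ} (hP : P < 0) (hs0 : 0 < s) (hs1 : s ≤ 1/100)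
    (hd0 : 0 ≤ d) (hd : d ≤ 10 * s) :
    Real.log (1/d) ^ P ≤ 2 ^ (-P) * Real.log (1/s) ^ P := by
  have h10 : (0:ℝ) < Real.log 10 := Real.log_pos (by norm_num)
  have hlog100 : Real.log 100 = 2 * Real.log 10 := by
    rw [show (100:ℝ) = 10 ^ (2:ℕ) by norm_num, Real.log_pow]; push_cast; ring
  have hL : 2 * Real.log 10 ≤ Real.log (1/s) := by
    rw [← hlog100]
    apply Real.log_le_log (by norm_num)
    rw [le_div_iff₀ hs0]; linarith
  have hLpos : 0 < Real.log (1/s) := by linarith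
  have h10s : Real.log (1/(10*s)) = Real.log (1/s) - Real.log 10 := by
    rw [show (1:ℝ)/(10*s) = (1/s)/10 by ring]
    exact Real.log_div (by positivity) (by norm_num)
  have hhalf : Real.log (1/s) / 2 ≤ Real.log (1/(10*s)) := by
    rw [h10s]; linarith
  have hmid : 0 < Real.log (1/(10*s)) := by linarith
  have step1 : Real.log (1/d) ^ P ≤ Real.log (1/(10*s)) ^ P := by
    rcases eq_or_lt_of_le hd0 with h0 | h0
    · rw [← h0, _root_.div_zero, Real.log_zero, Real.zero_rpow hP.ne]
      exact (Real.rpow_pos_of_pos hmid P).le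
    · have hle : Real.log (1/(10*s)) ≤ Real.log (1/d) :=
        Real.log_le_log (by positivity) (one_div_le_one_div_of_le h0 hd)
      exact Real.rpow_le_rpow_of_nonpos hmid hle hP.le
  have step2 : Real.log (1/(10*s)) ^ P ≤ (Real.log (1/s) / 2) ^ P :=
    Real.rpow_le_rpow_of_nonpos (by linarith) hhalf hP.le
  have step3 : (Real.log (1/s) / 2) ^ P = 2 ^ (-P) * Real.log (1/s) ^ P := by
    rw [div_eq_mul_inv, Real.mul_rpow hLpos.le (by norm_num),
      Real.inv_rpow (by norm_num : (0:ℝ) ≤ 2), ← Real.rpow_neg (by norm_num : (0:ℝ) ≤ 2)]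
    exact mul_comm _ _
  calc Real.log (1/d) ^ P ≤ Real.log (1/(10*s)) ^ P := step1
    _ ≤ (Real.log (1/s) / 2) ^ P := step2
    _ = 2 ^ (-P) * Real.log (1/s) ^ P := step3

/-- Let `Q > 1`, `ε > 0`, `c > 0` and `g ∈ L^Q(X,μ)` nonnegative Borel measurable.
The set `E` of points `x` admitting arbitrarily small radii `0 < r < 1/5` with
`∫_{B(x,r)} g^Q dμ ≥ c log^{-(Q-1+ε/2)}(1/r)` satisfies `H^{h₁}(E) < ∞` for
`h₁(t) = log^{1-Q-ε/2}(1/t)`, and consequently `H^h(E) = 0` for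
`h(t) = log^{1-Q-ε}(1/t)`. -/
theorem bad_set_hausdorff_null
    {X : Type*} [MetricSpace X] [MeasurableSpace X] [BorelSpace X]
    (μ : Measure X) (hballs : BallsPosFinite μ)
    (Q ε c : ℝ) (hQ : 1 < Q) (hε : 0 < ε) (hc : 0 < c)
    (g : X → ℝ) (hg0 : ∀ x, 0 ≤ g x) (hgm : Measurable g)
    (hgLQ : MemLp g (ENNReal.ofReal Q) μ) :
    hausdorffH (1 - Q - ε / 2)
        {x : X | ∀ r₀ > (0 : ℝ), ∃ r : ℝ, 0 < r ∧ r < r₀ ∧ r < 1 / 5 ∧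
          c * Real.log (1 / r) ^ (-(Q - 1 + ε / 2)) ≤ ∫ y in ball x r, g y ^ Q ∂μ} < ⊤ ∧
    hausdorffH (1 - Q - ε)
        {x : X | ∀ r₀ > (0 : ℝ), ∃ r : ℝ, 0 < r ∧ r < r₀ ∧ r < 1 / 5 ∧
          c * Real.log (1 / r) ^ (-(Q - 1 + ε / 2)) ≤ ∫ y in ball x r, g y ^ Q ∂μ} = 0 := by
  classical
  set E := {x : X | ∀ r₀ > (0 : ℝ), ∃ r : ℝ, 0 < r ∧ r < r₀ ∧ r < 1 / 5 ∧
      c * Real.log (1 / r) ^ (-(Q - 1 + ε / 2)) ≤ ∫ y in ball x r, g y ^ Q ∂μ} with hEdef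
  have hQ0 : (0:ℝ) < Q := by linarith
  set G : X → ℝ≥0∞ := fun x => ENNReal.ofReal (g x ^ Q) with hGdef
  have hGnn : ∀ x, (0:ℝ) ≤ g x ^ Q := fun x => Real.rpow_nonneg (hg0 x) Q
  have hGeq : ∀ x, G x = ‖g x‖ₑ ^ Q := by
    intro x
    show ENNReal.ofReal (g x ^ Q) = ‖g x‖ₑ ^ Q
    rw [Real.enorm_eq_ofReal (hg0 x), ← ENNReal.ofReal_rpow_of_nonneg (hg0 x) hQ0.le]
  set ν := μ.withDensity G with hνdef
  have hlint : ∫⁻ x, G x ∂μ ≠ ⊤ := by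
    have h1 := hgLQ.2
    rw [eLpNorm_eq_lintegral_rpow_enorm_toReal
        (by simp only [ne_eq, ENNReal.ofReal_eq_zero, not_le]; linarith) ENNReal.ofReal_ne_top,
      ENNReal.toReal_ofReal hQ0.le] at h1
    intro hcon
    rw [lintegral_congr hGeq] at hcon
    rw [hcon, ENNReal.top_rpow_of_pos (by positivity : (0:ℝ) < 1/Q)] at h1
    exact absurd h1 (lt_irrefl _)
  have hνuniv : ν univ ≠ ⊤ := by
    rw [hνdef, withDensity_apply _ MeasurableSet.univ, Measure.restrict_univ]
    exact hlint
  have hInt : Integrable (fun y => g y ^ Q) μ := by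
    refine ⟨(((Real.continuous_rpow_const hQ0.le).measurable.comp hgm).aestronglyMeasurable), ?_⟩
    rw [hasFiniteIntegral_iff_norm]
    have heq : ∀ y, ENNReal.ofReal ‖g y ^ Q‖ = G y := fun y => by
      rw [Real.norm_of_nonneg (hGnn y), hGdef]
    rw [lintegral_congr heq]
    exact hlint.lt_top
  set K := ENNReal.ofReal ((2:ℝ) ^ (-(1 - Q - ε/2)) / c) * ν univ with hKdef
  have hKtop : K ≠ ⊤ := ENNReal.mul_ne_top ENNReal.ofReal_ne_top hνuniv
  -- main covering construction
  have main : ∀ n : ℕ, ∃ (u : Set X) (rad : X → ℝ), u.Countable ∧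
      (∀ i : ↥u, EMetric.diam (closedBall (i:X) (5 * rad (i:X)))
        ≤ ENNReal.ofReal (10 * (1/((n:ℝ)+1)))) ∧
      (E ⊆ ⋃ i : ↥u, closedBall (i:X) (5 * rad (i:X))) ∧
      (∑' i : ↥u, hGauge (1 - Q - ε/2) (EMetric.diam (closedBall (i:X) (5 * rad (i:X)))) ≤ K) := by
    intro n
    set δ : ℝ := min (1/100) (1/((n:ℝ)+1)) with hδdef
    have hδ0 : 0 < δ := lt_min (by norm_num) (by positivity)
    have hδ1 : δ ≤ 1/100 := min_le_left _ _
    have hδn : δ ≤ 1/((n:ℝ)+1) := min_le_right _ _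
    have hch : ∀ x, x ∈ E → ∃ r : ℝ, 0 < r ∧ r < δ ∧
        ENNReal.ofReal (c * Real.log (1/r) ^ (-(Q - 1 + ε/2))) ≤ ν (ball x r) := by
      intro x hx
      obtain ⟨r, hr0, hrδ, hr5, hint⟩ := hx δ hδ0
      refine ⟨r, hr0, hrδ, ?_⟩
      have heq : ENNReal.ofReal (∫ y in ball x r, g y ^ Q ∂μ) = ν (ball x r) := by
        rw [hνdef, withDensity_apply _ measurableSet_ball,
          ← ofReal_integral_eq_lintegral_ofReal hInt.restrict
            (Eventually.of_forall fun y => hGnn y)]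
      calc ENNReal.ofReal (c * Real.log (1/r) ^ (-(Q - 1 + ε/2)))
          ≤ ENNReal.ofReal (∫ y in ball x r, g y ^ Q ∂μ) := ENNReal.ofReal_le_ofReal hint
        _ = ν (ball x r) := heq
    choose! rad hrad0 hradδ hradν using hch
    obtain ⟨u, huE, hdisj, hcov⟩ :=
      Vitali.exists_disjoint_subfamily_covering_enlargement_closedBall E id rad δ
        (fun a ha => (hradδ a ha).le) 5 (by norm_num)
    simp only [id] at hdisj hcov
    have hdisj' : Pairwise (Function.onFun Disjoint fun i : ↥u => closedBall (i:X) (rad (i:X))) := by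
      intro i j hij
      exact hdisj i.2 j.2 (Subtype.coe_injective.ne hij)
    have hlogpos : ∀ x, x ∈ E → 0 < Real.log (1/(rad x)) := by
      intro x hx
      refine Real.log_pos ?_
      rw [lt_div_iff₀ (hrad0 x hx)]
      have := hradδ x hx; linarith
    have hνcb_pos : ∀ i : ↥u, 0 < ν (closedBall (i:X) (rad (i:X))) := by
      intro i
      have hiE := huE i.2
      have hthr : 0 < c * Real.log (1/(rad (i:X))) ^ (-(Q - 1 + ε/2)) :=
        mul_pos hc (Real.rpow_pos_of_pos (hlogpos _ hiE) _)
      calc (0:ℝ≥0∞) < ENNReal.ofReal (c * Real.log (1/(rad (i:X))) ^ (-(Q - 1 + ε/2))) :=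
            ENNReal.ofReal_pos.2 hthr
        _ ≤ ν (ball (i:X) (rad (i:X))) := hradν _ hiE
        _ ≤ ν (closedBall (i:X) (rad (i:X))) := measure_mono ball_subset_closedBall
    have hcnt : u.Countable := by
      have hne : ν (⋃ i : ↥u, closedBall (i:X) (rad (i:X))) ≠ ⊤ :=
        ne_top_of_le_ne_top hνuniv (measure_mono (subset_univ _))
      have h := MeasureTheory.Measure.countable_meas_pos_of_disjoint_of_meas_iUnion_ne_top ν
        (fun i : ↥u => measurableSet_closedBall) hdisj' hne
      have huniv : {i : ↥u | 0 < ν (closedBall (i:X) (rad (i:X)))} = Set.univ :=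
        Set.eq_univ_of_forall hνcb_pos
      rw [huniv] at h
      exact Set.countable_coe_iff.mp (Set.countable_univ_iff.mp h)
    have hdiam10 : ∀ i : ↥u, EMetric.diam (closedBall (i:X) (5 * rad (i:X)))
        ≤ ENNReal.ofReal (10 * rad (i:X)) := by
      intro i
      have h0 := hrad0 _ (huE i.2)
      calc EMetric.diam (closedBall (i:X) (5 * rad (i:X)))
          ≤ 2 * ENNReal.ofReal (5 * rad (i:X)) := by
            rw [← Metric.emetric_closedBall (by positivity : (0:ℝ) ≤ 5 * rad (i:X))]
            exact EMetric.diam_closedBall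
        _ = ENNReal.ofReal (10 * rad (i:X)) := by
            rw [show (2:ℝ≥0∞) = ENNReal.ofReal 2 by norm_num,
              ← ENNReal.ofReal_mul (by norm_num : (0:ℝ) ≤ 2)]
            congr 1; ring
    refine ⟨u, rad, hcnt, ?_, ?_, ?_⟩
    · intro i
      refine le_trans (hdiam10 i) (ENNReal.ofReal_le_ofReal ?_)
      have := hradδ _ (huE i.2)
      have h1n : rad (i:X) ≤ 1/((n:ℝ)+1) := by linarith
      linarith
    · intro x hx
      obtain ⟨b, hbu, hsub⟩ := hcov x hx
      rw [mem_iUnion]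
      exact ⟨⟨b, hbu⟩, hsub (mem_closedBall_self (hrad0 x hx).le)⟩
    · have est : ∀ i : ↥u,
          hGauge (1 - Q - ε/2) (EMetric.diam (closedBall (i:X) (5 * rad (i:X))))
            ≤ ENNReal.ofReal ((2:ℝ) ^ (-(1 - Q - ε/2)) / c) * ν (closedBall (i:X) (rad (i:X))) := by
        intro i
        have hiE := huE i.2
        have h0 := hrad0 _ hiE
        have hδr := hradδ _ hiE
        have hbν := hradν _ hiE
        have hs1 : rad (i:X) ≤ 1/100 := by linarith
        set dE := EMetric.diam (closedBall (i:X) (5 * rad (i:X))) with hdE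
        have hd10 : dE.toReal ≤ 10 * rad (i:X) :=
          ENNReal.toReal_le_of_le_ofReal (by positivity) (hdiam10 i)
        have hreal : Real.log (1/dE.toReal) ^ (1 - Q - ε/2)
            ≤ 2 ^ (-(1 - Q - ε/2)) * Real.log (1/(rad (i:X))) ^ (1 - Q - ε/2) :=
          gauge_real_est (by linarith) h0 hs1 ENNReal.toReal_nonneg hd10
        have hexp : Real.log (1/(rad (i:X))) ^ (1 - Q - ε/2)
            = Real.log (1/(rad (i:X))) ^ (-(Q - 1 + ε/2)) := by
          congr 1; ring
        calc hGauge (1 - Q - ε/2) dE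
            = ENNReal.ofReal (Real.log (1/dE.toReal) ^ (1 - Q - ε/2)) := rfl
          _ ≤ ENNReal.ofReal ((2:ℝ) ^ (-(1 - Q - ε/2))
              * Real.log (1/(rad (i:X))) ^ (-(Q - 1 + ε/2))) := by
              rw [← hexp]; exact ENNReal.ofReal_le_ofReal hreal
          _ = ENNReal.ofReal (((2:ℝ) ^ (-(1 - Q - ε/2)) / c)
              * (c * Real.log (1/(rad (i:X))) ^ (-(Q - 1 + ε/2)))) := by
              congr 1; field_simp
          _ = ENNReal.ofReal ((2:ℝ) ^ (-(1 - Q - ε/2)) / c)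
              * ENNReal.ofReal (c * Real.log (1/(rad (i:X))) ^ (-(Q - 1 + ε/2))) :=
              ENNReal.ofReal_mul (by positivity)
          _ ≤ ENNReal.ofReal ((2:ℝ) ^ (-(1 - Q - ε/2)) / c) * ν (ball (i:X) (rad (i:X))) :=
              mul_le_mul_right hbν _
          _ ≤ ENNReal.ofReal ((2:ℝ) ^ (-(1 - Q - ε/2)) / c)
              * ν (closedBall (i:X) (rad (i:X))) :=
              mul_le_mul_right (measure_mono ball_subset_closedBall) _
      calc ∑' i : ↥u, hGauge (1 - Q - ε/2) (EMetric.diam (closedBall (i:X) (5 * rad (i:X))))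
          ≤ ∑' i : ↥u, ENNReal.ofReal ((2:ℝ) ^ (-(1 - Q - ε/2)) / c)
            * ν (closedBall (i:X) (rad (i:X))) := ENNReal.tsum_le_tsum est
        _ = ENNReal.ofReal ((2:ℝ) ^ (-(1 - Q - ε/2)) / c)
            * ∑' i : ↥u, ν (closedBall (i:X) (rad (i:X))) := ENNReal.tsum_mul_left
        _ ≤ K := by
            rw [hKdef]
            refine mul_le_mul_right ?_ _
            refine le_trans (tsum_meas_le_meas_iUnion_of_disjoint ν
              (fun i : ↥u => measurableSet_closedBall) hdisj') ?_
            exact measure_mono (subset_univ _)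
  choose u rad hucnt hudiam hucov husum using main
  haveI : ∀ n : ℕ, Countable ↥(u n) := fun n => (hucnt n).to_subtype
  have h1 : hausdorffH (1 - Q - ε/2) E ≤ K := by
    have hr0 : Tendsto (fun n : ℕ => ENNReal.ofReal (10 * (1/((n:ℝ)+1)))) atTop (𝓝 0) := by
      rw [show (0:ℝ≥0∞) = ENNReal.ofReal 0 by simp]
      refine ENNReal.tendsto_ofReal ?_
      have := tendsto_one_div_add_atTop_nhds_zero_nat.const_mul (10:ℝ)
      simpa using this
    have hmk := Measure.mkMetric_le_liminf_tsum (X := X) E _ hr0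
      (fun n (i : ↥(u n)) => closedBall (i:X) (5 * rad n (i:X)))
      (Eventually.of_forall hudiam) (Eventually.of_forall hucov) (hGauge (1 - Q - ε/2))
    refine le_trans hmk ?_
    refine le_trans (Filter.liminf_le_liminf (Eventually.of_forall husum)) ?_
    simp [Filter.liminf_const]
  have h1' : hausdorffH (1 - Q - ε/2) E < ⊤ := lt_of_le_of_lt h1 hKtop.lt_top
  refine ⟨h1', ?_⟩
  -- second part
  have h2 : ∀ k : ℝ, 0 < k →
      hausdorffH (1 - Q - ε) E ≤ ENNReal.ofReal k * hausdorffH (1 - Q - ε/2) E := by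
    intro k hk
    set B : ℝ := max 1 (k ^ (-(2/ε))) with hBdef
    set t₀ : ℝ := Real.exp (-B) with ht₀def
    have ht₀pos : 0 < t₀ := Real.exp_pos _
    have hev : hGauge (1 - Q - ε) ≤ᶠ[𝓝[≥] (0:ℝ≥0∞)] ENNReal.ofReal k • hGauge (1 - Q - ε/2) := by
      have hmem : ∀ᶠ t in 𝓝 (0:ℝ≥0∞), t < ENNReal.ofReal t₀ :=
        gt_mem_nhds (ENNReal.ofReal_pos.2 ht₀pos)
      refine (hmem.filter_mono nhdsWithin_le_nhds).mono ?_
      intro t ht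
      have hts : t.toReal < t₀ := (ENNReal.lt_ofReal_iff_toReal_lt (ne_top_of_lt ht)).1 ht
      show hGauge (1 - Q - ε) t ≤ ENNReal.ofReal k * hGauge (1 - Q - ε/2) t
      rcases le_or_gt t.toReal 0 with h0 | h0
      · have ht0 : t.toReal = 0 := le_antisymm h0 ENNReal.toReal_nonneg
        have : hGauge (1 - Q - ε) t = 0 := by
          rw [show hGauge (1 - Q - ε) t
              = ENNReal.ofReal (Real.log (1/t.toReal) ^ (1 - Q - ε)) from rfl,
            ht0, _root_.div_zero, Real.log_zero,
            Real.zero_rpow (by linarith : (1 - Q - ε : ℝ) ≠ 0)]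
          simp
        rw [this]; exact zero_le
      · set L := Real.log (1/t.toReal) with hL
        have hBle : B ≤ L := by
          have hlt : Real.log t.toReal < -B := by
            calc Real.log t.toReal < Real.log t₀ := Real.log_lt_log h0 hts
              _ = -B := Real.log_exp _
          rw [hL, one_div, Real.log_inv]; linarith
        have hL1 : (1:ℝ) ≤ L := le_trans (le_max_left _ _) hBle
        have hLk : L ^ (-(ε/2)) ≤ k := by
          have hkp : 0 < k ^ (-(2/ε)) := Real.rpow_pos_of_pos hk _
          have hle : L ^ (-(ε/2)) ≤ (k ^ (-(2/ε))) ^ (-(ε/2)) :=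
            Real.rpow_le_rpow_of_nonpos hkp (le_trans (le_max_right _ _) hBle) (by linarith)
          have hone : (k ^ (-(2/ε))) ^ (-(ε/2)) = k := by
            rw [← Real.rpow_mul hk.le]
            rw [show (-(2/ε)) * (-(ε/2)) = 1 by field_simp, Real.rpow_one]
          rwa [hone] at hle
        have key : L ^ (1 - Q - ε) ≤ k * L ^ (1 - Q - ε/2) := by
          have hsplit : L ^ (1 - Q - ε) = L ^ (1 - Q - ε/2) * L ^ (-(ε/2)) := by
            rw [← Real.rpow_add (by linarith : (0:ℝ) < L)]
            congr 1; ring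
          rw [hsplit]
          have hnn : (0:ℝ) ≤ L ^ (1 - Q - ε/2) := Real.rpow_nonneg (by linarith) _
          calc L ^ (1 - Q - ε/2) * L ^ (-(ε/2)) ≤ L ^ (1 - Q - ε/2) * k :=
              mul_le_mul_of_nonneg_left hLk hnn
            _ = k * L ^ (1 - Q - ε/2) := mul_comm _ _
        calc hGauge (1 - Q - ε) t = ENNReal.ofReal (L ^ (1 - Q - ε)) := rfl
          _ ≤ ENNReal.ofReal (k * L ^ (1 - Q - ε/2)) := ENNReal.ofReal_le_ofReal key
          _ = ENNReal.ofReal k * ENNReal.ofReal (L ^ (1 - Q - ε/2)) := ENNReal.ofReal_mul hk.le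
          _ = ENNReal.ofReal k * hGauge (1 - Q - ε/2) t := rfl
    have hmono := Measure.mkMetric_mono_smul (X := X) (c := ENNReal.ofReal k)
      ENNReal.ofReal_ne_top
      (by simp only [ne_eq, ENNReal.ofReal_eq_zero, not_le]; linarith) hev
    have happ := Measure.le_iff'.1 hmono E
    rw [Measure.smul_apply, smul_eq_mul] at happ
    exact happ
  refine le_antisymm ?_ zero_le
  have hfin : hausdorffH (1 - Q - ε/2) E ≠ ⊤ := h1'.ne
  have htends : Tendsto (fun m : ℕ => ENNReal.ofReal (1/((m:ℝ)+1))
      * hausdorffH (1 - Q - ε/2) E) atTop (𝓝 0) := by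
    have h0' : Tendsto (fun m : ℕ => ENNReal.ofReal (1/((m:ℝ)+1))) atTop (𝓝 0) := by
      rw [show (0:ℝ≥0∞) = ENNReal.ofReal 0 by simp]
      exact ENNReal.tendsto_ofReal tendsto_one_div_add_atTop_nhds_zero_nat
    simpa using ENNReal.Tendsto.mul_const h0' (Or.inr hfin)
  exact ge_of_tendsto' htends (fun m => h2 _ (by positivity))
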